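/- Let p be a prime, and F(x) = x^{p^r} + p^v a x^m + p^u b with p ∤ abu, 2 ≤ u ≤ v, 1 ≤ m < p^r, irreducible with root α generating K = ℚ(α). Then p divides the index [Z_K : Z[α]]; in particular F is not monogenic as a polynomial. -/

import Mathlib

open Polynomial NumberField

noncomputable def subIndex {K : Type*} [Field K] [NumberField K] (θ : 𝓞 K) : ℕ :=
  (Algebra.adjoin ℤ ({θ} : Set (𝓞 K))).toSubring.toAddSubgroup.index

def IsCommonIndexDivisor (p : ℕ) (K : Type*) [Field K] [NumberField K] : Prop :=
  ∀ θ : 𝓞 K, Algebra.adjoin ℚ ({(θ : K)} : Set K) = ⊤ → p ∣ subIndex θ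

def IsMonogenic (K : Type*) [Field K] [NumberField K] : Prop :=
  ∃ θ : 𝓞 K, Algebra.adjoin ℤ ({θ} : Set (𝓞 K)) = ⊤

lemma auxCoeInt {K : Type*} [Field K] [NumberField K] (a : ℤ) :
    (((a : 𝓞 K)) : K) = (a : K) := map_intCast (algebraMap (𝓞 K) K) a

lemma auxCoeNat {K : Type*} [Field K] [NumberField K] (a : ℕ) :
    (((a : 𝓞 K)) : K) = (a : K) := map_natCast (algebraMap (𝓞 K) K) a

theorem stmt_6 (p : ℕ) (hp : p.Prime) (r m u v : ℕ) (a b : ℤ)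
    (hr : 0 < r) (hu2 : 2 ≤ u) (huv : u ≤ v) (hm1 : 1 ≤ m) (hm : m < p ^ r)
    (ha : ¬ (p : ℤ) ∣ a) (hb : ¬ (p : ℤ) ∣ b) (hpu : ¬ p ∣ u)
    (hirr : Irreducible (X ^ (p ^ r) + C ((p : ℚ) ^ v * (a : ℚ)) * X ^ m
      + C ((p : ℚ) ^ u * (b : ℚ))))
    (K : Type*) [Field K] [NumberField K] (α : 𝓞 K)
    (hroot : (α : K) ^ (p ^ r) + ((p : K) ^ v * (a : K)) * (α : K) ^ m
      + (p : K) ^ u * (b : K) = 0)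
    (hgen : Algebra.adjoin ℚ ({(α : K)} : Set K) = ⊤) :
    p ∣ subIndex α := by
  haveI : Fact p.Prime := ⟨hp⟩
  set n := p ^ r with hn
  have hp2 : 2 ≤ p := hp.two_le
  have hn2 : 1 < n := by
    calc 1 < p := hp.one_lt
    _ ≤ p ^ r := Nat.le_self_pow hr.ne' p
  -- choose s, t with s * u = n * t + 1, s < n, 1 ≤ t
  have hco : Nat.Coprime u n := Nat.Coprime.pow_right r (hp.coprime_iff_not_dvd.mpr hpu).symm
  obtain ⟨m0, -, hm0⟩ := Nat.exists_mul_mod_eq_one_of_coprime hco hn2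
  set s : ℕ := m0 % n with hs
  have hsu : s * u % n = 1 := by
    rw [hs, Nat.mul_comm, Nat.mul_mod, Nat.mod_mod_of_dvd _ dvd_rfl, ← Nat.mul_mod]
    exact hm0
  set t : ℕ := s * u / n with ht
  have hst : s * u = n * t + 1 := by
    conv_lhs => rw [← Nat.div_add_mod (s * u) n]
    rw [hsu, ht]
  have hslt : s < n := Nat.mod_lt _ (by omega)
  have ht1 : 1 ≤ t := by
    rcases Nat.eq_zero_or_pos t with h0 | h1
    · exfalso
      rw [h0] at hst
      have h1 : s * u = 1 := by omega
      have := Nat.eq_one_of_mul_eq_one_left h1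
      omega
    · exact h1
  -- the integer polynomial
  set FZ : ℤ[X] := X ^ n + C ((p : ℤ) ^ v * a) * X ^ m + C ((p : ℤ) ^ u * b) with hFZ
  have hFZ' : FZ = X ^ n + (C ((p : ℤ) ^ v * a) * X ^ m + C ((p : ℤ) ^ u * b)) := by
    rw [hFZ, add_assoc]
  have hrestdeg : (C ((p : ℤ) ^ v * a) * X ^ m + C ((p : ℤ) ^ u * b)).degree
      < ((X : ℤ[X]) ^ n).degree := by
    rw [degree_X_pow]
    apply lt_of_le_of_lt (degree_add_le _ _)
    apply max_lt
    · apply lt_of_le_of_lt (degree_C_mul_X_pow_le _ _)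
      exact_mod_cast hm
    · apply lt_of_le_of_lt (degree_C_le)
      exact_mod_cast (by omega : (0:ℕ) < n)
  have hFZmonic : FZ.Monic := by
    rw [hFZ']
    exact (monic_X_pow n).add_of_left hrestdeg
  have hFZdeg : FZ.natDegree = n := by
    have hd : FZ.degree = n := by
      rw [hFZ', degree_add_eq_left_of_degree_lt hrestdeg, degree_X_pow]
    exact natDegree_eq_of_degree_eq_some hd
  -- α is integral
  have hint : IsIntegral ℤ α := Algebra.IsIntegral.isIntegral α
  -- FZ vanishes at α
  have haevalZ : aeval α FZ = 0 := by
    apply NumberField.RingOfIntegers.coe_injective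
    rw [map_zero, ← aeval_algebraMap_apply]
    rw [hFZ]
    simp only [map_add, map_mul, map_pow, aeval_X, aeval_C]
    push_cast [eq_intCast, map_intCast, map_natCast]
    linear_combination hroot
  -- FZ is the minimal polynomial of α over ℤ
  have hminQ : minpoly ℚ ((α : K)) = FZ.map (algebraMap ℤ ℚ) := by
    have hmapFQ : FZ.map (algebraMap ℤ ℚ) = X ^ n + C ((p : ℚ) ^ v * (a : ℚ)) * X ^ m
        + C ((p : ℚ) ^ u * (b : ℚ)) := by
      rw [hFZ]
      simp only [Polynomial.map_add, Polynomial.map_mul, Polynomial.map_pow, Polynomial.map_X,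
        Polynomial.map_C, eq_intCast, Polynomial.map_intCast]
      norm_cast
    rw [hmapFQ]
    refine (minpoly.eq_of_irreducible_of_monic hirr ?_ ?_).symm
    · simp only [map_add, map_mul, map_pow, aeval_X, aeval_C]
      push_cast [eq_intCast, map_intCast, map_natCast]
      linear_combination hroot
    · rw [← hmapFQ]
      exact hFZmonic.map _
  have hminZdeg : (minpoly ℤ α).natDegree = n := by
    have h1 : minpoly ℚ (algebraMap (𝓞 K) K α) = (minpoly ℤ α).map (algebraMap ℤ ℚ) :=
      minpoly.isIntegrallyClosed_eq_field_fractions ℚ K hint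
    have h2 : (algebraMap (𝓞 K) K) α = (α : K) := rfl
    rw [h2, hminQ] at h1
    have h3 := congrArg natDegree h1
    rw [natDegree_map_eq_of_injective (algebraMap ℤ ℚ).injective_int,
      natDegree_map_eq_of_injective (algebraMap ℤ ℚ).injective_int, hFZdeg] at h3
    omega
  have hFZ_eq : minpoly ℤ α = FZ := by
    obtain ⟨q, hq⟩ := minpoly.isIntegrallyClosed_dvd hint haevalZ
    have hmm : (minpoly ℤ α).Monic := minpoly.monic hint
    have hql : q.leadingCoeff = 1 := by
      have h := congrArg leadingCoeff hq
      rw [leadingCoeff_mul, hmm.leadingCoeff, one_mul, hFZmonic.leadingCoeff] at h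
      exact h.symm
    have hqm : q.Monic := hql
    have hdq : q.natDegree = 0 := by
      have h := congrArg natDegree hq
      rw [hFZdeg, natDegree_mul hmm.ne_zero hqm.ne_zero, hminZdeg] at h
      omega
    have hq1 : q = 1 := Polynomial.Monic.natDegree_eq_zero hqm |>.mp hdq
    rw [hq, hq1, mul_one]
  -- the auxiliary element c
  set c : 𝓞 K := (p : 𝓞 K) ^ (v - u) * (a : 𝓞 K) * α ^ m + (b : 𝓞 K) with hc
  have hpK : (p : K) ≠ 0 := Nat.cast_ne_zero.mpr hp.ne_zero
  have hkey1 : (α : K) ^ n = -((p : K) ^ u * (c : K)) := by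
    have hpow : (p : K) ^ u * (p : K) ^ (v - u) = (p : K) ^ v := by
      rw [← pow_add]
      congr 1
      omega
    rw [hc]
    push_cast [auxCoeInt, auxCoeNat]
    linear_combination hroot + ((a : K) * (α : K) ^ m) * hpow
  -- the element x = α ^ s / p ^ t
  set x : K := (α : K) ^ s / (p : K) ^ t with hx
  have hus : u * s = t * n + 1 := by rw [mul_comm u s, hst, mul_comm n t]
  have hkey2 : x ^ n = (((-1 : 𝓞 K) ^ s * (p : 𝓞 K) * c ^ s : 𝓞 K) : K) := by
    have h1 : ((α : K) ^ n) ^ s = (-1 : K) ^ s * ((p : K) ^ (t * n) * (p : K)) * (c : K) ^ s := by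
      rw [hkey1, show -((p : K) ^ u * (c : K)) = (-1 : K) * ((p : K) ^ u * (c : K)) by ring,
        mul_pow, mul_pow, ← pow_mul, hus, pow_add, pow_one]
      ring
    have h2 : x ^ n = ((α : K) ^ n) ^ s / ((p : K) ^ (t * n)) := by
      rw [hx, div_pow, ← pow_mul, ← pow_mul, mul_comm s n, pow_mul]
    rw [h2, h1]
    push_cast [auxCoeInt, auxCoeNat]
    field_simp
  have hxint : IsIntegral ℤ x := by
    have h1 : IsIntegral (𝓞 K) x := by
      refine ⟨X ^ n - C ((-1 : 𝓞 K) ^ s * (p : 𝓞 K) * c ^ s), monic_X_pow_sub_C _ (by omega), ?_⟩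
      rw [eval₂_sub, eval₂_pow, eval₂_X, eval₂_C]
      rw [show (algebraMap (𝓞 K) K) ((-1 : 𝓞 K) ^ s * (p : 𝓞 K) * c ^ s)
        = (((-1 : 𝓞 K) ^ s * (p : 𝓞 K) * c ^ s : 𝓞 K) : K) from rfl, ← hkey2, sub_self]
    exact isIntegral_trans x h1
  set θ : 𝓞 K := ⟨x, hxint⟩ with hθdef
  have hθcoe : (θ : K) = x := rfl
  have hθ : (p : 𝓞 K) ^ t * θ = α ^ s := by
    apply NumberField.RingOfIntegers.coe_injective
    push_cast [hθcoe, auxCoeInt, auxCoeNat]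
    rw [hx]
    field_simp
  -- θ is not in ℤ[α]
  have hnotmem : θ ∉ Algebra.adjoin ℤ ({α} : Set (𝓞 K)) := by
    intro hmem
    rw [Algebra.adjoin_singleton_eq_range_aeval] at hmem
    obtain ⟨g, hg⟩ := hmem
    have hz : aeval α (X ^ s - C ((p : ℤ) ^ t) * g) = 0 := by
      have hcast : (algebraMap ℤ (𝓞 K)) ((p : ℤ) ^ t) = (p : 𝓞 K) ^ t := by
        push_cast [eq_intCast]
        ring
      rw [map_sub, map_mul, aeval_C, map_pow, aeval_X, hcast]
      rw [show (aeval α) g = θ from hg, hθ, sub_self]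
    have hdvd2 : FZ ∣ X ^ s - C ((p : ℤ) ^ t) * g := hFZ_eq ▸ minpoly.isIntegrallyClosed_dvd hint hz
    have hdvd3 := Polynomial.map_dvd (Int.castRingHom (ZMod p)) hdvd2
    have hp0 : (((p : ℤ)) : ZMod p) = 0 := by
      push_cast
      exact ZMod.natCast_self p
    have hL : FZ.map (Int.castRingHom (ZMod p)) = X ^ n := by
      rw [hFZ]
      simp only [Polynomial.map_add, Polynomial.map_mul, Polynomial.map_pow, Polynomial.map_X,
        Polynomial.map_C, Int.coe_castRingHom]
      rw [show (((p : ℤ) ^ v * a : ℤ) : ZMod p) = ((p : ℤ) : ZMod p) ^ v * ((a : ℤ) : ZMod p) by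
        push_cast; ring]
      rw [show (((p : ℤ) ^ u * b : ℤ) : ZMod p) = ((p : ℤ) : ZMod p) ^ u * ((b : ℤ) : ZMod p) by
        push_cast; ring]
      rw [hp0, zero_pow (by omega : v ≠ 0), zero_pow (by omega : u ≠ 0)]
      simp
    have hR : (X ^ s - C ((p : ℤ) ^ t) * g).map (Int.castRingHom (ZMod p)) = X ^ s := by
      simp only [Polynomial.map_sub, Polynomial.map_mul, Polynomial.map_pow, Polynomial.map_X,
        Polynomial.map_C, Int.coe_castRingHom]
      rw [show (((p : ℤ) ^ t : ℤ) : ZMod p) = ((p : ℤ) : ZMod p) ^ t by push_cast; ring]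
      rw [hp0, zero_pow (by omega : t ≠ 0)]
      simp
    rw [hL, hR] at hdvd3
    rw [Polynomial.X_pow_dvd_iff] at hdvd3
    have hcf := hdvd3 s hslt
    rw [coeff_X_pow, if_pos rfl] at hcf
    exact one_ne_zero hcf
  -- group-theoretic conclusion
  show p ∣ (Algebra.adjoin ℤ ({α} : Set (𝓞 K))).toSubring.toAddSubgroup.index
  set A := (Algebra.adjoin ℤ ({α} : Set (𝓞 K))).toSubring.toAddSubgroup with hA
  set ξ : (𝓞 K) ⧸ A := QuotientAddGroup.mk θ with hξ
  have hξne : ξ ≠ 0 := by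
    rw [hξ, Ne, QuotientAddGroup.eq_zero_iff]
    exact hnotmem
  have hmemAs : (p ^ t) • θ ∈ A := by
    have hsm : (p ^ t) • θ = (p : 𝓞 K) ^ t * θ := by
      rw [nsmul_eq_mul]
      push_cast
      ring
    show (p ^ t) • θ ∈ (Algebra.adjoin ℤ ({α} : Set (𝓞 K)) : Subalgebra ℤ (𝓞 K))
    rw [hsm, hθ]
    exact pow_mem (Algebra.subset_adjoin (Set.mem_singleton α)) s
  have hsmul : (p ^ t) • ξ = 0 := by
    rw [hξ, ← QuotientAddGroup.mk_nsmul, QuotientAddGroup.eq_zero_iff]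
    exact hmemAs
  have hord : addOrderOf ξ ∣ p ^ t := addOrderOf_dvd_of_nsmul_eq_zero hsmul
  obtain ⟨k, hkle, hkeq⟩ := (Nat.dvd_prime_pow hp).mp hord
  have hk0 : k ≠ 0 := by
    rintro rfl
    rw [pow_zero] at hkeq
    exact hξne (AddMonoid.addOrderOf_eq_one_iff.mp hkeq)
  have hpord : p ∣ addOrderOf ξ := hkeq ▸ dvd_pow_self p hk0
  have hcard : addOrderOf ξ ∣ Nat.card ((𝓞 K) ⧸ A) := addOrderOf_dvd_natCard ξ
  exact hpord.trans hcard
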